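/- Let G be a DAG on finite vertex set V, i ∈ V, and J* ⊆ Pa(i). Form G' from G by deleting all outgoing edges of vertices in J* (and all incoming edges of some disjoint intervened set). Then Pa(i) \ J* blocks every undirected path from i to any j ∈ J* in G': each such path either starts at i via a parent in Pa(i) \ J* (a non-collider in the blocking set) or contains a collider w that is a descendant of i, and no descendant of i lies in Pa(i) \ J* by acyclicity. -/

import Mathlib

/-- The path `l` has a collider at position `t+1`: both neighboring edges point into it. -/
def ColliderAt {V : Type*} (E : V → V → Prop) (l : List V) (t : ℕ) : Prop :=
  ∃ a w b, l[t]? = some a ∧ l[t+1]? = some w ∧ l[t+2]? = some b ∧ E a w ∧ E b w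

/-- The undirected path `l` is blocked by the set `K`: some interior non-collider
vertex lies in `K`, or some collider `w` is such that neither `w` nor any descendant
of `w` lies in `K`. -/
def Blocked {V : Type*} (E : V → V → Prop) (K : Set V) (l : List V) : Prop :=
  (∃ t w, l[t+1]? = some w ∧ t + 2 < l.length ∧ ¬ ColliderAt E l t ∧ w ∈ K) ∨
  (∃ t w, l[t+1]? = some w ∧ ColliderAt E l t ∧ w ∉ K ∧
    ∀ d, Relation.TransGen E w d → d ∉ K)

/-- `l` is an undirected path from `u` to `v`: a list of distinct vertices starting at
`u`, ending at `v`, with consecutive vertices joined by an edge in either direction. -/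
def IsUPath {V : Type*} (E : V → V → Prop) (u v : V) (l : List V) : Prop :=
  l.Nodup ∧ l.head? = some u ∧ l.getLast? = some v ∧
    l.Chain' (fun a b => E a b ∨ E b a)

/-- `K` d-separates `I` from `J`: every undirected path between a vertex of `I` and a
vertex of `J` is blocked by `K`. -/
def DSep {V : Type*} (E : V → V → Prop) (I J K : Set V) : Prop :=
  ∀ u ∈ I, ∀ v ∈ J, ∀ l : List V, IsUPath E u v l → Blocked E K l

/-- A forward-directed run of edges gives a `TransGen` path. -/
lemma forward_trans {V : Type*} (E' : V → V → Prop) (f : ℕ → V) :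
    ∀ m : ℕ, 0 < m → (∀ k, k < m → E' (f k) (f (k+1))) →
    Relation.TransGen E' (f 0) (f m)
  | 0, h, _ => absurd h (by omega)
  | (m+1), _, hf => by
    rcases Nat.eq_zero_or_pos m with h0 | h0
    · subst h0; exact .single (hf 0 (by omega))
    · exact .tail (forward_trans E' f m h0 (fun k hk => hf k (by omega)))
        (hf m (by omega))

/-- let `J* ⊆ Pa i` and form `G'` from the DAG `G` by deleting all
outgoing edges of vertices in `J*` and all incoming edges of a disjoint intervened set
`R`.  Then `Pa i \ J*` blocks every undirected path from `i` to any `j ∈ J*` in `G'`,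
i.e. `Pa i \ J*` d-separates `{i}` from `J*` in `G'`. -/
theorem stmt16 {V : Type*} [Finite V] (E : V → V → Prop)
    (acyclic : ∀ v : V, ¬ Relation.TransGen E v v) (i : V)
    (Jstar R : Set V) (hJ : ∀ u ∈ Jstar, E u i)
    (hJR : Disjoint Jstar R) (hiR : i ∉ R) :
    DSep (fun u v => E u v ∧ u ∉ Jstar ∧ v ∉ R)
      {i} Jstar ({u | E u i} \ Jstar) := by
  classical
  set E' : V → V → Prop := fun u v => E u v ∧ u ∉ Jstar ∧ v ∉ R with hE'
  intro u hu v hv l hl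
  have hui : u = i := hu
  subst hui
  obtain ⟨hnd, hhead, hlast, hchain⟩ := hl
  -- basic facts
  have excl : ∀ a b : V, E a b → ¬ E b a := fun a b h h' =>
    acyclic a (.tail (.single h) h')
  have hiJ : u ∉ Jstar := fun h => acyclic u (.single (hJ u h))
  have mono : ∀ a b : V, Relation.TransGen E' a b → Relation.TransGen E a b :=
    fun a b h => Relation.TransGen.mono (fun _ _ hh => hh.1) _ _ h
  -- index the path by a function
  set f : ℕ → V := fun k => l.getD k u with hf
  have hne : l ≠ [] := by rintro rfl; simp at hhead
  have hlen : 0 < l.length := List.length_pos_iff.mpr hne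
  have hfeq : ∀ t (ht : t < l.length), f t = l[t]'ht := by
    intro t ht
    simp [hf, List.getD, List.getElem?_eq_getElem ht]
  have hfsome : ∀ t (ht : t < l.length), l[t]? = some (f t) := by
    intro t ht
    rw [hfeq t ht]; exact List.getElem?_eq_getElem ht
  have h0 : f 0 = u := by
    rw [List.head?_eq_getElem?, hfsome 0 hlen] at hhead
    exact (Option.some_injective _ hhead)
  have hN : f (l.length - 1) = v := by
    rw [List.getLast?_eq_getElem?, hfsome _ (by omega)] at hlast
    exact (Option.some_injective _ hlast)
  have chain : ∀ k, k + 1 < l.length → E' (f k) (f (k+1)) ∨ E' (f (k+1)) (f k) := by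
    intro k hk
    have := List.isChain_iff_getElem.mp hchain k (by omega)
    rw [hfeq k (by omega), hfeq (k+1) hk]
    simpa [List.get_eq_getElem] using this
  have hne2 : 2 ≤ l.length := by
    by_contra h
    have h1 : l.length = 1 := by omega
    have : u = v := by rw [← h0, ← hN, h1]
    exact hiJ (this ▸ hv)
  rcases chain 0 (by omega) with hfwd | hbwd
  · -- first edge points out of u = i: find the first backward edge
    have hS : ∃ k, k + 1 < l.length ∧ ¬ E' (f k) (f (k+1)) := by
      by_contra hSe
      push_neg at hSe
      have := forward_trans E' f (l.length - 1) (by omega)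
        (fun k hk => hSe k (by omega))
      rw [h0, hN] at this
      exact acyclic u (.tail (mono _ _ this) (hJ v hv))
    set m := Nat.find hS with hm
    obtain ⟨hm1, hmb⟩ : m + 1 < l.length ∧ ¬ E' (f m) (f (m+1)) := Nat.find_spec hS
    have hmin : ∀ k, k < m → k + 1 < l.length → E' (f k) (f (k+1)) := by
      intro k hk hk1
      by_contra h
      exact Nat.find_min hS hk ⟨hk1, h⟩
    have hmpos : 0 < m := by
      rcases Nat.eq_zero_or_pos m with h | h
      · exact absurd (h ▸ hfwd) (h ▸ hmb)
      · exact h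
    have hbedge : E' (f (m+1)) (f m) := (chain m hm1).resolve_left hmb
    have htrans : Relation.TransGen E' u (f m) := by
      have := forward_trans E' f m hmpos (fun k hk => hmin k hk (by omega))
      rwa [h0] at this
    refine Or.inr ⟨m - 1, f m, ?_, ?_, ?_, ?_⟩
    · rw [show m - 1 + 1 = m by omega]
      exact hfsome m (by omega)
    · refine ⟨f (m-1), f m, f (m+1), ?_, ?_, ?_, ?_, hbedge⟩
      · exact hfsome _ (by omega)
      · rw [show m - 1 + 1 = m by omega]; exact hfsome m (by omega)
      · rw [show m - 1 + 2 = m + 1 by omega]; exact hfsome _ (by omega)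
      · have := hmin (m-1) (by omega) (by omega)
        rwa [show m - 1 + 1 = m by omega] at this
    · rintro ⟨hEwi, -⟩
      exact acyclic u (.tail (mono _ _ htrans) hEwi)
    · rintro d hd ⟨hEdi, -⟩
      exact acyclic u (.tail ((mono _ _ htrans).trans (mono _ _ hd)) hEdi)
  · -- first edge points into u = i: f 1 is a parent of i not in Jstar
    rw [h0] at hbwd
    obtain ⟨hEwu, hwJ, -⟩ := hbwd
    have hwv : f 1 ≠ v := fun h => hwJ (h ▸ hv)
    have hlen3 : 3 ≤ l.length := by
      by_contra h
      have h2 : l.length = 2 := by omega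
      exact hwv (by rw [← hN, h2])
    refine Or.inl ⟨0, f 1, hfsome 1 (by omega), by omega, ?_, hEwu, hwJ⟩
    rintro ⟨a, w, b, ha, hw, hb, hEaw, -⟩
    have ha' : a = u := by
      rw [hfsome 0 hlen, h0] at ha
      exact (Option.some_injective _ ha.symm)
    have hw' : w = f 1 := by
      rw [hfsome 1 (by omega)] at hw
      exact (Option.some_injective _ hw.symm)
    subst ha'; subst hw'
    exact excl _ _ hEwu hEaw.1
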